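/- Let A, B be bounded positive operators on a complex Hilbert space H, and let B = B_a + B_s be the canonical Lebesgue decomposition with B_a ≪ A maximal and B_s ⊥ A. The decomposition of B into an A-absolutely continuous and an A-singular summand is unique if and only if there exists α ≥ 0 with B_a ≤ αA. -/

import Mathlib

open Filter

local notation "⟪" x ", " y "⟫" => @inner ℂ _ _ x y

variable {H : Type*} [NormedAddCommGroup H] [InnerProductSpace ℂ H] [CompleteSpace H]

/-- The quadratic-form order: `A ≤ B` iff `⟨Ax, x⟩ ≤ ⟨Bx, x⟩` for all `x`. -/
def QuadLE (A B : H →L[ℂ] H) : Prop :=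
  ∀ x : H, (⟪A x, x⟫).re ≤ (⟪B x, x⟫).re

/-- `B` is absolutely continuous with respect to `A` (`B ≪ A`): for every sequence `(xₙ)`,
if `⟨Axₙ, xₙ⟩ → 0` and `⟨B(xₙ−xₘ), xₙ−xₘ⟩ → 0` as `n, m → ∞`, then `⟨Bxₙ, xₙ⟩ → 0`. -/
def AbsCont (B A : H →L[ℂ] H) : Prop :=
  ∀ x : ℕ → H,
    Tendsto (fun n => (⟪A (x n), x n⟫).re) atTop (nhds 0) →
    (∀ ε > (0 : ℝ), ∃ N : ℕ, ∀ n ≥ N, ∀ m ≥ N,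
      (⟪B (x n - x m), x n - x m⟫).re < ε) →
    Tendsto (fun n => (⟪B (x n), x n⟫).re) atTop (nhds 0)

/-- `A` and `B` are mutually singular (`A ⊥ B`): the only bounded positive operator `C` with
`C ≤ A` and `C ≤ B` is `C = 0`. -/
def MutSing (A B : H →L[ℂ] H) : Prop :=
  ∀ C : H →L[ℂ] H, C.IsPositive → QuadLE C A → QuadLE C B → C = 0


set_option linter.unusedSectionVars false
set_option maxHeartbeats 1000000

namespace AndoAux

open ContinuousLinearMap

noncomputable def rankOne (e : H) : H →L[ℂ] H := (innerSL ℂ e).smulRight e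

lemma rankOne_apply (e x : H) : rankOne e x = (⟪e, x⟫ : ℂ) • e := rfl

lemma rankOne_selfAdjoint (e : H) : IsSelfAdjoint (rankOne e) := by
  rw [ContinuousLinearMap.isSelfAdjoint_iff']
  ext z
  apply ext_inner_right ℂ
  intro y
  rw [ContinuousLinearMap.adjoint_inner_left]
  rw [rankOne_apply, rankOne_apply, inner_smul_left, inner_smul_right, inner_conj_symm]
  ring

lemma rankOne_form (e x : H) : (⟪rankOne e x, x⟫ : ℂ) = (‖(⟪e, x⟫ : ℂ)‖ : ℂ) ^ 2 := by
  rw [rankOne_apply, inner_smul_left, ← Complex.normSq_eq_conj_mul_self,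
    Complex.normSq_eq_norm_sq]
  norm_cast

lemma rankOne_form_re (e x : H) : (⟪rankOne e x, x⟫).re = ‖(⟪e, x⟫ : ℂ)‖ ^ 2 := by
  rw [rankOne_form]; norm_cast

lemma rankOne_pos (e : H) : (rankOne e).IsPositive := by
  refine ⟨ContinuousLinearMap.isSelfAdjoint_iff_isSymmetric.mp (rankOne_selfAdjoint e), fun x => ?_⟩
  have h : (0:ℝ) ≤ ‖(⟪e, x⟫ : ℂ)‖ ^ 2 := sq_nonneg _
  show (0:ℝ) ≤ (⟪rankOne e x, x⟫).re
  rw [rankOne_form_re]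
  exact h

lemma form_nonneg {T : H →L[ℂ] H} (hT : T.IsPositive) (x : H) : 0 ≤ (⟪T x, x⟫).re := by
  have := hT.re_inner_nonneg_left x
  simpa using this

lemma form_real {T : H →L[ℂ] H} (hT : IsSelfAdjoint T) (x : H) :
    (⟪T x, x⟫ : ℂ) = ((⟪T x, x⟫).re : ℂ) := by
  have h1 : ⟪T x, x⟫ = ⟪x, T x⟫ := by
    conv_lhs => rw [← hT.adjoint_eq]
    exact ContinuousLinearMap.adjoint_inner_left T x x
  have h2 : (starRingEnd ℂ) ⟪T x, x⟫ = ⟪T x, x⟫ := by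
    rw [inner_conj_symm]; exact h1.symm
  exact (Complex.conj_eq_iff_re.mp h2).symm

lemma exists_sqrt {T : H →L[ℂ] H} (hT : T.IsPositive) :
    ∃ f : H →L[ℂ] H, f.IsPositive ∧ ∀ x, f (f x) = T x := by
  refine ⟨CFC.sqrt T, (nonneg_iff_isPositive _).mp (CFC.sqrt_nonneg T), fun x => ?_⟩
  have h := CFC.sqrt_mul_sqrt_self T ((nonneg_iff_isPositive T).mpr hT)
  calc CFC.sqrt T (CFC.sqrt T x) = (CFC.sqrt T * CFC.sqrt T) x := rfl
    _ = T x := by rw [h]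

lemma form_eq_sq {T f : H →L[ℂ] H} (hf : f.IsPositive) (hff : ∀ x, f (f x) = T x) (x : H) :
    (⟪T x, x⟫).re = ‖f x‖ ^ 2 := by
  have h1 : ⟪T x, x⟫ = ⟪f x, f x⟫ := by
    have h2 := ContinuousLinearMap.adjoint_inner_left f x (f x)
    rw [hf.isSelfAdjoint.adjoint_eq] at h2
    rw [← hff x, h2]
  rw [h1]
  have := @inner_self_eq_norm_sq ℂ _ _ _ _ (f x)
  simpa using this

lemma apply_eq_zero {T f : H →L[ℂ] H} (hf : f.IsPositive) (hff : ∀ x, f (f x) = T x)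
    {x : H} (hx : (⟪T x, x⟫).re = 0) : T x = 0 := by
  rw [form_eq_sq hf hff] at hx
  have : f x = 0 := by
    have : ‖f x‖ = 0 := by nlinarith [norm_nonneg (f x)]
    simpa using this
  rw [← hff x, this, map_zero]

lemma form_add (S T : H →L[ℂ] H) (x : H) :
    (⟪(S + T) x, x⟫).re = (⟪S x, x⟫).re + (⟪T x, x⟫).re := by
  simp [ContinuousLinearMap.add_apply, inner_add_left]

lemma form_sub (S T : H →L[ℂ] H) (x : H) :
    (⟪(S - T) x, x⟫).re = (⟪S x, x⟫).re - (⟪T x, x⟫).re := by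
  simp [ContinuousLinearMap.sub_apply, inner_sub_left]

lemma isPositive_of_form {T : H →L[ℂ] H} (hsa : IsSelfAdjoint T)
    (h : ∀ x, 0 ≤ (⟪T x, x⟫).re) : T.IsPositive := by
  refine ⟨ContinuousLinearMap.isSelfAdjoint_iff_isSymmetric.mp hsa, fun x => ?_⟩
  have := h x
  simpa [ContinuousLinearMap.reApplyInnerSelf] using this

lemma absCont_of_quadLE {C A : H →L[ℂ] H} (hC : C.IsPositive) (h : QuadLE C A) :
    AbsCont C A := by
  intro x hx _
  refine squeeze_zero (fun n => form_nonneg hC (x n)) (fun n => h (x n)) hx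

lemma absCont_add {S T A : H →L[ℂ] H} (hS : S.IsPositive) (hT : T.IsPositive)
    (haS : AbsCont S A) (haT : AbsCont T A) : AbsCont (S + T) A := by
  intro x hx hc
  have hcS : ∀ ε > (0 : ℝ), ∃ N : ℕ, ∀ n ≥ N, ∀ m ≥ N,
      (⟪S (x n - x m), x n - x m⟫).re < ε := by
    intro ε hε
    obtain ⟨N, hN⟩ := hc ε hε
    refine ⟨N, fun n hn m hm => lt_of_le_of_lt ?_ (hN n hn m hm)⟩
    rw [form_add]
    linarith [form_nonneg hT (x n - x m)]
  have hcT : ∀ ε > (0 : ℝ), ∃ N : ℕ, ∀ n ≥ N, ∀ m ≥ N,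
      (⟪T (x n - x m), x n - x m⟫).re < ε := by
    intro ε hε
    obtain ⟨N, hN⟩ := hc ε hε
    refine ⟨N, fun n hn m hm => lt_of_le_of_lt ?_ (hN n hn m hm)⟩
    rw [form_add]
    linarith [form_nonneg hS (x n - x m)]
  have h0 := (haS x hx hcS).add (haT x hx hcT)
  rw [add_zero] at h0
  have : (fun n => (⟪(S + T) (x n), x n⟫).re)
      = fun n => (⟪S (x n), x n⟫).re + (⟪T (x n), x n⟫).re := by
    funext n; exact form_add S T (x n)
  rw [this]
  exact h0

lemma form_smul (T : H →L[ℂ] H) (γ : ℂ) (v : H) :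
    (⟪T (γ • v), γ • v⟫).re = ‖γ‖ ^ 2 * (⟪T v, v⟫).re := by
  rw [map_smul, inner_smul_left, inner_smul_right, ← mul_assoc]
  have h1 : (starRingEnd ℂ) γ * γ = ((‖γ‖ ^ 2 : ℝ) : ℂ) := by
    rw [mul_comm, Complex.mul_conj]
    norm_cast
    rw [Complex.sq_norm]
  rw [h1, Complex.re_ofReal_mul]

lemma helper_norm {h : H} (hh : ‖h‖ = 1) (u : H) :
    ‖u - (⟪h, u⟫ : ℂ) • h‖ ^ 2 = ‖u‖ ^ 2 - ‖(⟪h, u⟫ : ℂ)‖ ^ 2 := by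
  have hs := @norm_sub_sq ℂ _ _ _ _ u ((⟪h, u⟫ : ℂ) • h)
  rw [hs]
  have h1 : (⟪u, ((⟪h, u⟫ : ℂ) • h)⟫ : ℂ) = (⟪h, u⟫ : ℂ) * ⟪u, h⟫ := inner_smul_right u h _
  have h2 : (⟪u, h⟫ : ℂ) = (starRingEnd ℂ) (⟪h, u⟫ : ℂ) := (inner_conj_symm u h).symm
  have h3 : RCLike.re (⟪u, ((⟪h, u⟫ : ℂ) • h)⟫ : ℂ) = ‖(⟪h, u⟫ : ℂ)‖ ^ 2 := by
    rw [h1, h2, Complex.mul_conj]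
    simp only [RCLike.re_to_complex, Complex.ofReal_re]
    rw [Complex.sq_norm]
  rw [h3, norm_smul, hh, mul_one]
  ring

lemma form_cauchy_of_tendsto {T f : H →L[ℂ] H} (hf : f.IsPositive) (hff : ∀ x, f (f x) = T x)
    {y : ℕ → H} {v : H} (hy : Tendsto (fun n => f (y n)) atTop (nhds v)) :
    ∀ ε > (0:ℝ), ∃ N : ℕ, ∀ n ≥ N, ∀ m ≥ N, (⟪T (y n - y m), y n - y m⟫).re < ε := by
  intro ε hε
  obtain ⟨N, hN⟩ := (Metric.cauchySeq_iff.mp hy.cauchySeq) (Real.sqrt ε) (Real.sqrt_pos.mpr hε)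
  refine ⟨N, fun n hn m hm => ?_⟩
  have h1 : (⟪T (y n - y m), y n - y m⟫).re = ‖f (y n) - f (y m)‖ ^ 2 := by
    rw [form_eq_sq hf hff, map_sub]
  rw [h1]
  have h2 : ‖f (y n) - f (y m)‖ < Real.sqrt ε := by
    rw [← dist_eq_norm]; exact hN n hn m hm
  nlinarith [Real.sq_sqrt hε.le, norm_nonneg (f (y n) - f (y m)), Real.sqrt_nonneg ε]

/-- Key analytic lemma: `Ba - (fB h)⊗(fB h)` is absolutely continuous w.r.t. `A`. -/
lemma absCont_sub_rankOne {A Ba fB : H →L[ℂ] H} (hA : A.IsPositive)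
    (hfB : fB.IsPositive) (hcomp : ∀ x, fB (fB x) = Ba x) (hac : AbsCont Ba A)
    {h : H} (hh : ‖h‖ = 1) :
    AbsCont (Ba - rankOne (fB h)) A := by
  intro x hA0 hC
  set e : H := fB h with hedef
  -- inner identity
  have hinner : ∀ z : H, (⟪e, z⟫ : ℂ) = ⟪h, fB z⟫ := by
    intro z
    have h2 := ContinuousLinearMap.adjoint_inner_left fB z h
    rw [hfB.isSelfAdjoint.adjoint_eq] at h2
    exact h2
  -- the quadratic form of `Ba - rankOne e`
  have hform : ∀ z : H, (⟪(Ba - rankOne e) z, z⟫).re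
      = ‖fB z - (⟪h, fB z⟫ : ℂ) • h‖ ^ 2 := by
    intro z
    rw [form_sub, form_eq_sq hfB hcomp, rankOne_form_re, hinner z, helper_norm hh (fB z)]
  -- the projected sequence
  set q : ℕ → H := fun n => fB (x n) - (⟪h, fB (x n)⟫ : ℂ) • h with hqdef
  set c : ℕ → ℂ := fun n => (⟪h, fB (x n)⟫ : ℂ) with hcdef
  have hdecomp : ∀ n, fB (x n) = c n • h + q n := by
    intro n
    show fB (x n) = (⟪h, fB (x n)⟫ : ℂ) • h + (fB (x n) - (⟪h, fB (x n)⟫ : ℂ) • h)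
    rw [add_comm, sub_add_cancel]
  -- q is Cauchy
  have hqcauchy : CauchySeq q := by
    rw [Metric.cauchySeq_iff]
    intro ε hε
    obtain ⟨N, hN⟩ := hC (ε ^ 2) (by positivity)
    refine ⟨N, fun n hn m hm => ?_⟩
    have h1 := hN n hn m hm
    rw [hform (x n - x m)] at h1
    have h2 : fB (x n - x m) - (⟪h, fB (x n - x m)⟫ : ℂ) • h = q n - q m := by
      rw [hqdef, map_sub, inner_sub_right]
      simp only [sub_smul]
      abel
    rw [h2] at h1
    rw [dist_eq_norm]
    exact lt_of_pow_lt_pow_left₀ 2 hε.le h1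
  obtain ⟨w, hw⟩ := cauchySeq_tendsto_of_complete hqcauchy
  -- h ⟂ q n
  have hqh : ∀ n, (⟪h, q n⟫ : ℂ) = 0 := by
    intro n
    rw [hqdef]
    simp only [inner_sub_right, inner_smul_right]
    rw [inner_self_eq_norm_sq_to_K, hh]
    push_cast
    ring
  have hwh : (⟪h, w⟫ : ℂ) = 0 := by
    have h1 : Tendsto (fun n => (⟪h, q n⟫ : ℂ)) atTop (nhds (⟪h, w⟫ : ℂ)) :=
      tendsto_const_nhds.inner hw
    have h2 : (fun n => (⟪h, q n⟫ : ℂ)) = fun _ => (0 : ℂ) := funext hqh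
    rw [h2] at h1
    exact (tendsto_nhds_unique tendsto_const_nhds h1).symm
  -- boundedness of c
  have hbdd : ∃ M : ℝ, ∀ n, ‖c n‖ ≤ M := by
    by_contra hub
    push_neg at hub
    have hfreq : ∀ k : ℕ, ∃ᶠ n in atTop, (k : ℝ) < ‖c n‖ := by
      intro k
      rw [Filter.frequently_atTop]
      intro N
      set M0 : ℝ := (Finset.range (N + 1)).sup' (by simp) (fun i => ‖c i‖) with hM0
      obtain ⟨n, hn⟩ := hub (max M0 k)
      refine ⟨n, ?_, lt_of_le_of_lt (le_max_right _ _) hn⟩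
      by_contra hlt
      push_neg at hlt
      have h1 : ‖c n‖ ≤ M0 :=
        Finset.le_sup' (fun i => ‖c i‖) (Finset.mem_range.mpr (by omega))
      exact absurd (lt_of_le_of_lt (le_max_left _ _) hn) (not_lt.mpr h1)
    obtain ⟨φ, hφ, hφc⟩ := Filter.extraction_forall_of_frequently hfreq
    have hcne : ∀ k, c (φ k) ≠ 0 := by
      intro k h0
      have h1 := hφc k
      rw [h0, norm_zero] at h1
      exact absurd h1 (not_lt.mpr (Nat.cast_nonneg k))
    set y : ℕ → H := fun k => (c (φ k))⁻¹ • x (φ k) with hydef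
    have hyA : Tendsto (fun k => (⟪A (y k), y k⟫).re) atTop (nhds 0) := by
      apply squeeze_zero' (Eventually.of_forall fun k => form_nonneg hA (y k)) ?_
        (hA0.comp (hφ.tendsto_atTop))
      rw [eventually_atTop]
      refine ⟨1, fun k hk => ?_⟩
      show (⟪A ((c (φ k))⁻¹ • x (φ k)), (c (φ k))⁻¹ • x (φ k)⟫).re
        ≤ (⟪A (x (φ k)), x (φ k)⟫).re
      rw [form_smul]
      have h2 : (1:ℝ) ≤ ‖c (φ k)‖ := le_trans (by exact_mod_cast hk) (hφc k).le
      have h3 : ‖(c (φ k))⁻¹‖ ≤ 1 := by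
        rw [norm_inv, inv_eq_one_div, div_le_one (lt_of_lt_of_le one_pos h2)]
        exact h2
      have h4 := form_nonneg hA (x (φ k))
      have h5 : ‖(c (φ k))⁻¹‖ ^ 2 ≤ 1 := by nlinarith [norm_nonneg ((c (φ k))⁻¹)]
      calc ‖(c (φ k))⁻¹‖ ^ 2 * (⟪A (x (φ k)), x (φ k)⟫).re
          ≤ 1 * (⟪A (x (φ k)), x (φ k)⟫).re := mul_le_mul_of_nonneg_right h5 h4
        _ = (⟪A (x (φ k)), x (φ k)⟫).re := one_mul _
    have hfBy : Tendsto (fun k => fB (y k)) atTop (nhds h) := by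
      have h1 : ∀ k, fB (y k) = h + (c (φ k))⁻¹ • q (φ k) := by
        intro k
        show fB ((c (φ k))⁻¹ • x (φ k)) = _
        rw [map_smul, hdecomp (φ k), smul_add, smul_smul, inv_mul_cancel₀ (hcne k), one_smul]
      have h2 : Tendsto (fun k => (c (φ k))⁻¹) atTop (nhds (0:ℂ)) := by
        rw [tendsto_zero_iff_norm_tendsto_zero]
        have hup : Tendsto (fun k : ℕ => ((k:ℝ))⁻¹) atTop (nhds 0) := by
          have := tendsto_one_div_atTop_nhds_zero_nat (𝕜 := ℝ)
          simpa [one_div] using this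
        apply squeeze_zero' (Eventually.of_forall fun k => norm_nonneg _) ?_ hup
        rw [eventually_atTop]
        refine ⟨1, fun k hk => ?_⟩
        rw [norm_inv]
        have hkpos : (0:ℝ) < k := by exact_mod_cast hk
        exact inv_anti₀ hkpos (hφc k).le
      have h3 : Tendsto (fun k => (c (φ k))⁻¹ • q (φ k)) atTop (nhds ((0:ℂ) • w)) :=
        h2.smul (hw.comp hφ.tendsto_atTop)
      rw [zero_smul] at h3
      have h4 := (tendsto_const_nhds : Tendsto (fun _ : ℕ => h) atTop (nhds h)).add h3
      rw [add_zero] at h4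
      have h5 : (fun k => fB (y k)) = fun k => h + (c (φ k))⁻¹ • q (φ k) := funext h1
      rw [h5]
      exact h4
    have hycauchy := form_cauchy_of_tendsto hfB hcomp hfBy
    have hlim := hac y hyA hycauchy
    have hlim2 : Tendsto (fun k => (⟪Ba (y k), y k⟫).re) atTop (nhds 1) := by
      have h1 : (fun k => (⟪Ba (y k), y k⟫).re) = fun k => ‖fB (y k)‖ ^ 2 :=
        funext fun k => form_eq_sq hfB hcomp (y k)
      rw [h1]
      have h2 := (hfBy.norm).pow 2
      rw [hh] at h2
      norm_num at h2
      exact h2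
    have hcontra := tendsto_nhds_unique hlim hlim2
    norm_num at hcontra
  -- now use boundedness
  obtain ⟨M, hM⟩ := hbdd
  have hmem : ∀ n, c n ∈ Metric.closedBall (0:ℂ) M := by
    intro n
    rw [Metric.mem_closedBall, dist_zero_right]
    exact hM n
  obtain ⟨γ, -, φ, hφ, hγ⟩ := tendsto_subseq_of_bounded Metric.isBounded_closedBall hmem
  have hv : Tendsto (fun k => fB (x (φ k))) atTop (nhds (γ • h + w)) := by
    have h1 : (fun k => fB (x (φ k))) = fun k => c (φ k) • h + q (φ k) :=
      funext fun k => hdecomp (φ k)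
    rw [h1]
    exact (hγ.smul tendsto_const_nhds).add (hw.comp hφ.tendsto_atTop)
  have hxφA : Tendsto (fun k => (⟪A (x (φ k)), x (φ k)⟫).re) atTop (nhds 0) :=
    hA0.comp hφ.tendsto_atTop
  have hxφc := form_cauchy_of_tendsto hfB hcomp hv
  have hlim := hac (fun k => x (φ k)) hxφA hxφc
  have hlim2 : Tendsto (fun k => (⟪Ba (x (φ k)), x (φ k)⟫).re) atTop
      (nhds (‖γ • h + w‖ ^ 2)) := by
    have h1 : (fun k => (⟪Ba (x (φ k)), x (φ k)⟫).re) = fun k => ‖fB (x (φ k))‖ ^ 2 :=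
      funext fun k => form_eq_sq hfB hcomp (x (φ k))
    rw [h1]
    exact (hv.norm).pow 2
  have hveq : ‖γ • h + w‖ ^ 2 = 0 := tendsto_nhds_unique hlim2 hlim
  have hv0 : γ • h + w = 0 := by
    have h1 : ‖γ • h + w‖ = 0 := by
      nlinarith [norm_nonneg (γ • h + w), sq_nonneg ‖γ • h + w‖]
    exact norm_eq_zero.mp h1
  have hγ0 : γ = 0 := by
    have h1 : (⟪h, γ • h + w⟫ : ℂ) = γ := by
      rw [inner_add_right, inner_smul_right, inner_self_eq_norm_sq_to_K, hh, hwh]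
      push_cast
      ring
    rw [hv0, inner_zero_right] at h1
    exact h1.symm
  have hw0 : w = 0 := by
    rw [hγ0, zero_smul, zero_add] at hv0
    exact hv0
  have hgoal : (fun n => (⟪(Ba - rankOne e) (x n), x n⟫).re) = fun n => ‖q n‖ ^ 2 := by
    funext n
    rw [hform (x n)]
  rw [hgoal]
  have hfin := (hw.norm).pow 2
  rw [hw0, norm_zero] at hfin
  norm_num at hfin
  exact hfin

/-- Douglas: pointwise range inclusion implies majorization. -/
lemma norm_le_of_range_subset {f g : H →L[ℂ] H} (hf : IsSelfAdjoint f) (hg : IsSelfAdjoint g)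
    (hr : ∀ x : H, ∃ y : H, f y = g x) :
    ∃ α : ℝ, 0 ≤ α ∧ ∀ x : H, ‖g x‖ ≤ α * ‖f x‖ := by
  classical
  set N : Submodule ℂ H := LinearMap.ker (f : H →ₗ[ℂ] H) with hNdef
  have hNclosed : IsClosed (N : Set H) := ContinuousLinearMap.isClosed_ker f
  haveI : CompleteSpace N := hNclosed.completeSpace_coe
  set K : Submodule ℂ H := Nᗮ with hKdef
  have hKclosed : IsClosed (K : Set H) := N.isClosed_orthogonal
  -- the candidate map
  have hex : ∀ x : H, ∃ y : H, y ∈ K ∧ f y = g x := by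
    intro x
    obtain ⟨y0, hy0⟩ := hr x
    refine ⟨(K.orthogonalProjection y0 : H), Submodule.coe_mem _, ?_⟩
    have hmem : y0 - (K.orthogonalProjection y0 : H) ∈ Kᗮ :=
      K.sub_starProjection_mem_orthogonal y0
    have hKorth : Kᗮ = N := by rw [hKdef]; exact Submodule.orthogonal_orthogonal N
    rw [hKorth] at hmem
    have : f (y0 - (K.orthogonalProjection y0 : H)) = 0 := hmem
    rw [map_sub, sub_eq_zero] at this
    rw [← this, hy0]
  set W0 : H → H := fun x => (hex x).choose with hW0
  have hW0K : ∀ x, W0 x ∈ K := fun x => (hex x).choose_spec.1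
  have hW0f : ∀ x, f (W0 x) = g x := fun x => (hex x).choose_spec.2
  have huniq : ∀ (x y : H), y ∈ K → f y = g x → y = W0 x := by
    intro x y hyK hyf
    have hmemN : y - W0 x ∈ N := by
      have : f (y - W0 x) = 0 := by rw [map_sub, hyf, hW0f, sub_self]
      exact this
    have hmemK : y - W0 x ∈ K := Submodule.sub_mem K hyK (hW0K x)
    have : y - W0 x = 0 := by
      have h0 := (Submodule.mem_orthogonal N (y - W0 x)).mp hmemK (y - W0 x) hmemN
      exact inner_self_eq_zero.mp h0
    rw [sub_eq_zero] at this
    exact this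
  have hadd : ∀ x y, W0 (x + y) = W0 x + W0 y := by
    intro x y
    refine (huniq (x + y) _ (Submodule.add_mem K (hW0K x) (hW0K y)) ?_).symm
    rw [map_add, hW0f, hW0f, map_add]
  have hsmul : ∀ (c : ℂ) (x : H), W0 (c • x) = c • W0 x := by
    intro c x
    refine (huniq (c • x) _ (Submodule.smul_mem K c (hW0K x)) ?_).symm
    rw [map_smul, hW0f, map_smul]
  set W : H →ₗ[ℂ] H :=
    { toFun := W0, map_add' := hadd, map_smul' := hsmul } with hWdef
  have hWcont : Continuous W := by
    apply LinearMap.continuous_of_seq_closed_graph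
    intro u x y hux huy
    have h1 : Tendsto (fun n => f (W0 (u n))) atTop (nhds (f y)) :=
      (f.continuous.tendsto y).comp huy
    have h2 : Tendsto (fun n => g (u n)) atTop (nhds (g x)) :=
      (g.continuous.tendsto x).comp hux
    have h3 : (fun n => f (W0 (u n))) = fun n => g (u n) := funext fun n => hW0f (u n)
    rw [h3] at h1
    have hfy : f y = g x := tendsto_nhds_unique h1 h2
    have hyK : y ∈ K := hKclosed.mem_of_tendsto huy (Eventually.of_forall fun n => hW0K (u n))
    exact (huniq x y hyK hfy)
  set Wc : H →L[ℂ] H := ⟨W, hWcont⟩ with hWc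
  have hcomp : f.comp Wc = g := by
    ext x
    exact hW0f x
  have hadj2 : g = (ContinuousLinearMap.adjoint Wc).comp f := by
    have h1 : ContinuousLinearMap.adjoint (f.comp Wc) =
        (ContinuousLinearMap.adjoint Wc).comp (ContinuousLinearMap.adjoint f) :=
      ContinuousLinearMap.adjoint_comp f Wc
    rw [hcomp, hg.adjoint_eq, hf.adjoint_eq] at h1
    exact h1
  refine ⟨‖ContinuousLinearMap.adjoint Wc‖, norm_nonneg _, fun x => ?_⟩
  calc ‖g x‖ = ‖(ContinuousLinearMap.adjoint Wc) (f x)‖ := by rw [hadj2]; rfl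
    _ ≤ ‖ContinuousLinearMap.adjoint Wc‖ * ‖f x‖ := le_opNorm _ _

/-- Riesz / Hahn-Banach: a vector whose inner products are dominated by `‖f ·‖` is in range `f`. -/
lemma mem_range_of_inner_le {f : H →L[ℂ] H} (hf : IsSelfAdjoint f) {e : H} {c : ℝ}
    (hb : ∀ x : H, ‖(⟪e, x⟫ : ℂ)‖ ≤ c * ‖f x‖) : ∃ z : H, f z = e := by
  classical
  have indep : ∀ x y : H, f x = f y → (⟪e, x⟫ : ℂ) = ⟪e, y⟫ := by
    intro x y hxy
    have h0 : ‖(⟪e, x - y⟫ : ℂ)‖ ≤ c * ‖f (x - y)‖ := hb (x - y)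
    rw [map_sub, hxy, sub_self, norm_zero, mul_zero] at h0
    have : (⟪e, x - y⟫ : ℂ) = 0 := norm_le_zero_iff.mp h0
    rw [inner_sub_right, sub_eq_zero] at this
    exact this
  set R : Submodule ℂ H := LinearMap.range (f : H →ₗ[ℂ] H) with hR
  have hsel : ∀ u : R, ∃ x : H, f x = (u : H) := fun u => LinearMap.mem_range.mp u.2
  set sel : R → H := fun u => (hsel u).choose with hseldef
  have hself : ∀ u : R, f (sel u) = (u : H) := fun u => (hsel u).choose_spec
  set ψ0 : R →ₗ[ℂ] ℂ :=
    { toFun := fun u => ⟪e, sel u⟫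
      map_add' := by
        intro u v
        have h1 : f (sel (u + v)) = f (sel u + sel v) := by
          rw [map_add, hself, hself, hself, Submodule.coe_add]
        show (⟪e, sel (u + v)⟫ : ℂ) = ⟪e, sel u⟫ + ⟪e, sel v⟫
        rw [indep _ _ h1, inner_add_right]
      map_smul' := by
        intro a u
        have h1 : f (sel (a • u)) = f (a • sel u) := by
          rw [map_smul, hself, hself, Submodule.coe_smul]
        show (⟪e, sel (a • u)⟫ : ℂ) = a • (⟪e, sel u⟫ : ℂ)
        rw [indep _ _ h1, inner_smul_right]; rfl } with hψ0
  have hψ0b : ∀ u : R, ‖ψ0 u‖ ≤ c * ‖u‖ := by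
    intro u
    have := hb (sel u)
    rw [hself u] at this
    exact this
  set ψ : R →L[ℂ] ℂ := LinearMap.mkContinuous ψ0 c hψ0b with hψ
  obtain ⟨G, hGext, -⟩ := exists_extension_norm_eq R ψ
  set z : H := (InnerProductSpace.toDual ℂ H).symm G with hz
  have hzdual : ∀ y : H, (⟪z, y⟫ : ℂ) = G y := fun y => InnerProductSpace.toDual_symm_apply
  refine ⟨z, ?_⟩
  have key : ∀ x : H, (⟪f z - e, x⟫ : ℂ) = 0 := by
    intro x
    have h1 : (⟪f z, x⟫ : ℂ) = ⟪z, f x⟫ := by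
      have h2 := ContinuousLinearMap.adjoint_inner_left f x z
      rw [hf.adjoint_eq] at h2
      exact h2
    have hmem : f x ∈ R := LinearMap.mem_range_self _ x
    have h3 : (⟪z, f x⟫ : ℂ) = ψ0 ⟨f x, hmem⟩ := by
      rw [hzdual (f x)]
      exact hGext ⟨f x, hmem⟩
    have h4 : ψ0 ⟨f x, hmem⟩ = ⟪e, x⟫ := by
      have h5 : f (sel ⟨f x, hmem⟩) = f x := hself _
      exact indep _ _ h5
    rw [inner_sub_left, h1, h3, h4, sub_self]
  have := key (f z - e)
  rw [inner_self_eq_zero] at this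
  rw [sub_eq_zero] at this
  exact this

/-- A rank-one operator whose vector is not in the range of `√A` is singular w.r.t. `A`. -/
lemma mutSing_rankOne {A fA : H →L[ℂ] H} (hfA : fA.IsPositive)
    (hcomp : ∀ x, fA (fA x) = A x) {e : H} (he : ∀ z : H, fA z ≠ e) :
    MutSing (rankOne e) A := by
  intro C hC hCT hCA
  obtain ⟨fC, hfC, hfCc⟩ := exists_sqrt hC
  -- C vanishes on the orthogonal complement of e
  have hker : ∀ x : H, (⟪e, x⟫ : ℂ) = 0 → C x = 0 := by
    intro x hx
    have h1 : (⟪C x, x⟫).re = 0 := by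
      have h2 := hCT x
      rw [rankOne_form_re, hx] at h2
      have h3 := form_nonneg hC x
      simp at h2
      linarith
    exact apply_eq_zero hfC hfCc h1
  have he0 : e ≠ 0 := by
    intro h0
    exact he 0 (by rw [map_zero, h0])
  have hd : (0:ℝ) < ‖e‖ ^ 2 := pow_pos (norm_pos_iff.mpr he0) 2
  set d : ℂ := ((‖e‖ : ℂ) ^ 2) with hddef
  have hdne : d ≠ 0 := by
    have h1 : (‖e‖ : ℂ) ≠ 0 := by
      exact_mod_cast norm_ne_zero_iff.mpr he0
    rw [hddef]
    exact pow_ne_zero 2 h1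
  have hee : (⟪e, e⟫ : ℂ) = d := by rw [hddef]; exact inner_self_eq_norm_sq_to_K e
  -- C x = (⟪e,x⟫/d) • C e
  have hdec : ∀ x : H, C x = ((⟪e, x⟫ : ℂ) / d) • C e := by
    intro x
    have hx' : (⟪e, x - ((⟪e, x⟫ : ℂ) / d) • e⟫ : ℂ) = 0 := by
      rw [inner_sub_right, inner_smul_right, hee]
      field_simp
      ring
    have h0 := hker _ hx'
    rw [map_sub, map_smul, sub_eq_zero] at h0
    rw [h0]
  -- C e = μ • e
  set m : ℝ := (⟪C e, e⟫ : ℂ).re with hmdef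
  have hCe : C e = ((m : ℂ) / d) • e := by
    set μ : ℂ := ((⟪C e, e⟫ : ℂ) / d) with hμdef
    have hμ2 : μ = ((m : ℂ) / d) := by
      rw [hμdef, ← form_real hC.isSelfAdjoint e]
    set r : H := C e - μ • e with hrdef
    have hr1 : (⟪e, r⟫ : ℂ) = 0 := by
      rw [hrdef, inner_sub_right, inner_smul_right, hee, hμdef]
      have : (⟪e, C e⟫ : ℂ) = ⟪C e, e⟫ := by
        have h2 := ContinuousLinearMap.adjoint_inner_left C e e
        rw [hC.isSelfAdjoint.adjoint_eq] at h2
        exact h2.symm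
      rw [this]
      field_simp
      ring
    have hr2 : C r = 0 := hker r hr1
    have hr3 : (⟪r, r⟫ : ℂ) = 0 := by
      rw [hrdef]
      nth_rewrite 1 [← hrdef]
      rw [inner_sub_left, inner_smul_left]
      have h4 : (⟪C e, r⟫ : ℂ) = ⟪e, C r⟫ := by
        have h2 := ContinuousLinearMap.adjoint_inner_left C r e
        rw [hC.isSelfAdjoint.adjoint_eq] at h2
        exact h2
      rw [h4, hr2, inner_zero_right, hr1]
      ring
    have hr0 : r = 0 := inner_self_eq_zero.mp hr3
    have h9 : C e = μ • e := by
      have := sub_eq_zero.mp (hrdef ▸ hr0)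
      exact this
    rw [h9, hμ2]
  -- the coefficient
  have hm0 : 0 ≤ m := form_nonneg hC e
  by_cases hm : m = 0
  · ext x
    rw [hdec x, hCe, hm]
    simp
  · exfalso
    set s : ℝ := m / ‖e‖ ^ 4 with hsdef
    have hspos : 0 < s := by
      have hmp : 0 < m := lt_of_le_of_ne hm0 (Ne.symm hm)
      rw [hsdef]
      exact div_pos hmp (pow_pos (norm_pos_iff.mpr he0) 4)
    have hCrank : C = ((s : ℂ)) • rankOne e := by
      ext x
      rw [hdec x, hCe]
      rw [ContinuousLinearMap.smul_apply, rankOne_apply, smul_smul, smul_smul]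
      congr 1
      rw [hsdef, hddef]
      push_cast
      ring
    have hform : ∀ x : H, (⟪C x, x⟫).re = s * ‖(⟪e, x⟫ : ℂ)‖ ^ 2 := by
      intro x
      rw [hCrank, ContinuousLinearMap.smul_apply, inner_smul_left, Complex.conj_ofReal,
        rankOne_form]
      norm_cast
    have hb : ∀ x : H, ‖(⟪e, x⟫ : ℂ)‖ ≤ (Real.sqrt s)⁻¹ * ‖fA x‖ := by
      intro x
      have h1 : s * ‖(⟪e, x⟫ : ℂ)‖ ^ 2 ≤ ‖fA x‖ ^ 2 := by
        have h2 := hCA x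
        rw [hform x] at h2
        have h3 : (⟪A x, x⟫).re = ‖fA x‖ ^ 2 := by
          have h4 : ⟪A x, x⟫ = ⟪fA x, fA x⟫ := by
            have h5 := ContinuousLinearMap.adjoint_inner_left fA x (fA x)
            rw [hfA.isSelfAdjoint.adjoint_eq] at h5
            rw [← hcomp x, h5]
          rw [h4]
          have := @inner_self_eq_norm_sq ℂ _ _ _ _ (fA x)
          simpa using this
        rw [h3] at h2
        exact h2
      have h6 : ‖(⟪e, x⟫ : ℂ)‖ ^ 2 ≤ ((Real.sqrt s)⁻¹ * ‖fA x‖) ^ 2 := by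
        rw [mul_pow, ← Real.sqrt_inv, Real.sq_sqrt (by positivity : (0:ℝ) ≤ s⁻¹)]
        have h6a := mul_le_mul_of_nonneg_left h1 (le_of_lt (inv_pos.mpr hspos))
        rw [← mul_assoc, inv_mul_cancel₀ (ne_of_gt hspos), one_mul] at h6a
        exact h6a
      have h7 : 0 ≤ (Real.sqrt s)⁻¹ * ‖fA x‖ := by positivity
      nlinarith [norm_nonneg (⟪e, x⟫ : ℂ)]
    obtain ⟨z, hz⟩ := mem_range_of_inner_le hfA.isSelfAdjoint hb
    exact he z hz


lemma form_real_smul (r : ℝ) (T : H →L[ℂ] H) (z : H) :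
    (⟪(((r:ℂ)) • T) z, z⟫).re = r * (⟪T z, z⟫).re := by
  rw [ContinuousLinearMap.smul_apply, inner_smul_left, Complex.conj_ofReal,
    Complex.re_ofReal_mul]

end AndoAux

/-- **Ando's uniqueness theorem** (Theorem 7.2, Hilbert space case). Let `B = B_a + B_s` be
the canonical Lebesgue decomposition of `B` with respect to `A` (`B_a ≪ A` maximal,
`B_s ⊥ A`). The decomposition of `B` into an `A`-absolutely continuous and an `A`-singular
positive summand is unique iff `B_a ≤ αA` for some `α ≥ 0`. -/
theorem stmt_16 (A B Ba Bs : H →L[ℂ] H)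
    (hA : A.IsPositive) (hB : B.IsPositive) (hBa : Ba.IsPositive) (hBs : Bs.IsPositive)
    (hsum : B = Ba + Bs) (hac : AbsCont Ba A) (hsing : MutSing Bs A)
    (hmax : ∀ C : H →L[ℂ] H, C.IsPositive → QuadLE C B → AbsCont C A → QuadLE C Ba) :
    (∀ B₁ B₂ : H →L[ℂ] H, B₁.IsPositive → B₂.IsPositive → B = B₁ + B₂ →
        AbsCont B₁ A → MutSing B₂ A → B₁ = Ba ∧ B₂ = Bs) ↔
      ∃ α : ℝ, 0 ≤ α ∧ ∀ x : H, (⟪Ba x, x⟫).re ≤ α * (⟪A x, x⟫).re := by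
  constructor
  · -- uniqueness → domination
    intro huniq
    by_contra hno
    push_neg at hno
    obtain ⟨fA, hfA, hfAc⟩ := AndoAux.exists_sqrt hA
    obtain ⟨fB, hfBpos, hfBc⟩ := AndoAux.exists_sqrt hBa
    -- there is a vector outside the range
    have hrange : ¬ ∀ x : H, ∃ y : H, fA y = fB x := by
      intro hall
      obtain ⟨α, hα0, hαb⟩ :=
        AndoAux.norm_le_of_range_subset hfA.isSelfAdjoint hfBpos.isSelfAdjoint hall
      obtain ⟨x, hx⟩ := hno (α ^ 2) (by positivity)
      rw [AndoAux.form_eq_sq hfBpos hfBc, AndoAux.form_eq_sq hfA hfAc] at hx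
      nlinarith [hαb x, norm_nonneg (fA x), norm_nonneg (fB x)]
    push_neg at hrange
    obtain ⟨h0, hh0⟩ := hrange
    have hh0ne : h0 ≠ 0 := by
      intro h00
      exact hh0 0 (by rw [h00, map_zero, map_zero])
    have hn0 : ‖h0‖ ≠ 0 := norm_ne_zero_iff.mpr hh0ne
    set hv : H := ((‖h0‖⁻¹ : ℝ) : ℂ) • h0 with hvdef
    have hh1 : ‖hv‖ = 1 := by
      rw [hvdef, norm_smul]
      simp only [Complex.norm_real, norm_inv, norm_norm, Real.norm_eq_abs]
      rw [abs_of_nonneg (norm_nonneg h0)]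
      exact inv_mul_cancel₀ hn0
    set e : H := fB hv with hedef
    have he : ∀ z : H, fA z ≠ e := by
      intro z hz
      apply hh0 (((‖h0‖ : ℝ) : ℂ) • z)
      rw [map_smul, hz, hedef, ← map_smul, hvdef, smul_smul]
      congr 2
      push_cast
      rw [mul_inv_cancel₀ (by exact_mod_cast hn0), one_smul]
    set T : H →L[ℂ] H := AndoAux.rankOne e with hTdef
    have hTpos := AndoAux.rankOne_pos e
    have hinner : ∀ z : H, (⟪e, z⟫ : ℂ) = ⟪hv, fB z⟫ := by
      intro z
      have h2 := ContinuousLinearMap.adjoint_inner_left fB z hv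
      rw [hfBpos.isSelfAdjoint.adjoint_eq] at h2
      exact h2
    have hTle : QuadLE T Ba := by
      intro z
      rw [hTdef, AndoAux.rankOne_form_re, AndoAux.form_eq_sq hfBpos hfBc, hinner z]
      have h3 : ‖(⟪hv, fB z⟫ : ℂ)‖ ≤ ‖fB z‖ := by
        calc ‖(⟪hv, fB z⟫ : ℂ)‖ ≤ ‖hv‖ * ‖fB z‖ := norm_inner_le_norm _ _
          _ = ‖fB z‖ := by rw [hh1, one_mul]
      nlinarith [norm_nonneg (⟪hv, fB z⟫ : ℂ)]
    have hBaT : (Ba - T).IsPositive :=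
      AndoAux.isPositive_of_form (hBa.isSelfAdjoint.sub (AndoAux.rankOne_selfAdjoint e))
        (fun z => by rw [AndoAux.form_sub]; linarith [hTle z])
    have hacBaT : AbsCont (Ba - T) A :=
      AndoAux.absCont_sub_rankOne hA hfBpos hfBc hac hh1
    have hTsing : MutSing T A := AndoAux.mutSing_rankOne hfA hfAc he
    have hBsT : MutSing (Bs + T) A := by
      intro C hC hCBsT hCA
      have hCac : AbsCont C A := AndoAux.absCont_of_quadLE hC hCA
      have hGpos : ((Ba - T) + C).IsPositive := hBaT.add hC
      have hGac : AbsCont ((Ba - T) + C) A := AndoAux.absCont_add hBaT hC hacBaT hCac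
      have hGleB : QuadLE ((Ba - T) + C) B := by
        intro z
        rw [AndoAux.form_add, AndoAux.form_sub, hsum, AndoAux.form_add]
        have h4 := hCBsT z
        rw [AndoAux.form_add] at h4
        linarith
      have hGle := hmax _ hGpos hGleB hGac
      have hCleT : QuadLE C T := by
        intro z
        have h5 := hGle z
        rw [AndoAux.form_add, AndoAux.form_sub] at h5
        linarith
      exact hTsing C hC hCleT hCA
    have hBsum : B = (Ba - T) + (Bs + T) := by rw [hsum]; abel
    obtain ⟨hB1, -⟩ := huniq (Ba - T) (Bs + T) hBaT (hBs.add hTpos) hBsum hacBaT hBsT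
    have hT0 : T = 0 := sub_eq_self.mp hB1
    have hene : e ≠ 0 := by
      intro h00
      exact he 0 (by rw [map_zero, h00])
    have hTe : T e = 0 := by rw [hT0]; rfl
    rw [hTdef, AndoAux.rankOne_apply, inner_self_eq_norm_sq_to_K] at hTe
    rcases smul_eq_zero.mp hTe with h6 | h6
    · exact (pow_ne_zero 2 (by exact_mod_cast norm_ne_zero_iff.mpr hene : (‖e‖:ℂ) ≠ 0)) h6
    · exact hene h6
  · -- domination → uniqueness
    rintro ⟨α, hα0, hαb⟩ B₁ B₂ h₁ h₂ hsum₂ hac₂ hsing₂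
    have h₁leB : QuadLE B₁ B := by
      intro z
      rw [hsum₂, AndoAux.form_add]
      linarith [AndoAux.form_nonneg h₂ z]
    have h₁le := hmax B₁ h₁ h₁leB hac₂
    set κ : ℝ := max α 1 with hκ
    have hκpos : (0:ℝ) < κ := lt_of_lt_of_le one_pos (le_max_right _ _)
    set D : H →L[ℂ] H := Ba - B₁ with hD
    have hDpos : D.IsPositive :=
      AndoAux.isPositive_of_form (hBa.isSelfAdjoint.sub h₁.isSelfAdjoint)
        (fun z => by rw [hD, AndoAux.form_sub]; linarith [h₁le z])
    set C : H →L[ℂ] H := ((κ⁻¹ : ℝ) : ℂ) • D with hC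
    have hCsa : IsSelfAdjoint C := by
      rw [hC, IsSelfAdjoint, star_smul]
      rw [hDpos.isSelfAdjoint.star_eq]
      congr 1
      exact Complex.conj_ofReal _
    have hCform : ∀ z : H, (⟪C z, z⟫).re = κ⁻¹ * (⟪D z, z⟫).re := by
      intro z
      rw [hC]
      exact AndoAux.form_real_smul κ⁻¹ D z
    have hCpos : C.IsPositive :=
      AndoAux.isPositive_of_form hCsa (fun z => by
        rw [hCform z]
        have := AndoAux.form_nonneg hDpos z
        positivity)
    have hCA : QuadLE C A := by
      intro z
      rw [hCform z]
      have h3 : (⟪D z, z⟫).re ≤ κ * (⟪A z, z⟫).re := by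
        rw [hD, AndoAux.form_sub]
        have h4 := hαb z
        have h5 := AndoAux.form_nonneg h₁ z
        have h6 := AndoAux.form_nonneg hA z
        have h7 : α ≤ κ := le_max_left _ _
        nlinarith
      calc κ⁻¹ * (⟪D z, z⟫).re ≤ κ⁻¹ * (κ * (⟪A z, z⟫).re) :=
            mul_le_mul_of_nonneg_left h3 (inv_nonneg.mpr hκpos.le)
        _ = (⟪A z, z⟫).re := by field_simp
    have hop : D = B₂ - Bs := by
      rw [hD]
      rw [sub_eq_sub_iff_add_eq_add]
      rw [← hsum, hsum₂]
      abel
    have hCB₂ : QuadLE C B₂ := by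
      intro z
      rw [hCform z]
      have h3 : (⟪D z, z⟫).re ≤ (⟪B₂ z, z⟫).re := by
        rw [hop, AndoAux.form_sub]
        linarith [AndoAux.form_nonneg hBs z]
      have h4 := AndoAux.form_nonneg hDpos z
      have h5 : κ⁻¹ ≤ 1 := by
        rw [inv_eq_one_div, div_le_one hκpos]
        exact le_max_right _ _
      nlinarith
    have hC0 : C = 0 := hsing₂ C hCpos hCB₂ hCA
    have hD0 : D = 0 := by
      have h6 : ((κ⁻¹ : ℝ) : ℂ) ≠ 0 := by
        exact_mod_cast (inv_ne_zero (ne_of_gt hκpos))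
      rcases smul_eq_zero.mp (hC ▸ hC0) with h7 | h7
      · exact absurd h7 h6
      · exact h7
    have hB₁Ba : B₁ = Ba := (sub_eq_zero.mp (hD ▸ hD0)).symm
    refine ⟨hB₁Ba, ?_⟩
    have h8 : Ba + Bs = B₁ + B₂ := hsum ▸ hsum₂
    rw [hB₁Ba] at h8
    exact (add_left_cancel h8).symm
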